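/- Let (X,Y) be a random vector on [0,∞)² with joint Lebesgue density f satisfying P(Y = 0) = 0, and let T be independent of (X,Y) with Lebesgue density g on [0,∞). Set Δ = 1{X ≤ T} and Z = Δ·Y. Then the law of W = (T, Z) on [0,∞)² has density s_f with respect to μ; that is, for every Borel set B ⊆ [0,∞)², P((T,Z) ∈ B) = ∫_B s_f dμ. -/
import Mathlib

open MeasureTheory Set Real Filter

noncomputable section

/-- The set 𝓜 = [0,M₁]×[0,M₂]. -/
def Mset (M₁ M₂ : ℝ) : Set (ℝ × ℝ) := Icc 0 M₁ ×ˢ Icc 0 M₂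

/-- The dominating measure μ on ℝ²: two-dimensional Lebesgue measure plus one-dimensional
Lebesgue measure on the horizontal half-axis `[0,∞) × {0}`. -/
def domMeasure : Measure (ℝ × ℝ) :=
  volume + Measure.map (fun x : ℝ => (x, (0 : ℝ))) (volume.restrict (Ici 0))

/-- ∂₂F(t,z) = ∫₀ᵗ f(u,z) du. -/
def d2F (f : ℝ × ℝ → ℝ) (t z : ℝ) : ℝ := ∫ u in (0 : ℝ)..t, f (u, z)

/-- The marginal distribution function F_X(t) = ∫₀ᵗ ∫₀^∞ f(u,v) dv du. -/
def margX (f : ℝ × ℝ → ℝ) (t : ℝ) : ℝ := ∫ u in (0 : ℝ)..t, ∫ v in Ioi (0 : ℝ), f (u, v)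

/-- The observed-data density
`s_f(t,z) = g(t)·(1{z>0}·∂₂F(t,z) + 1{z=0}·(1 − F_X(t)))`. -/
def sDens (f : ℝ × ℝ → ℝ) (g : ℝ → ℝ) (w : ℝ × ℝ) : ℝ :=
  g w.1 * (if 0 < w.2 then d2F f w.1 w.2 else if w.2 = 0 then 1 - margX f w.1 else 0)

/-- parametric set-integral measurability over `Ioc (a w) (b w)`. -/
lemma meas_setInt {α : Type*} [MeasurableSpace α] (f : α → ℝ → ℝ)
    (hf : Measurable (Function.uncurry f)) (a b : α → ℝ) (ha : Measurable a) (hb : Measurable b) :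
    Measurable fun w : α => ∫ u in Ioc (a w) (b w), f w u := by
  have h1 : ∀ w, (∫ u in Ioc (a w) (b w), f w u)
      = ∫ u, (Ioc (a w) (b w)).indicator (f w) u := by
    intro w
    rw [integral_indicator measurableSet_Ioc]
  simp_rw [h1]
  have : Measurable (Function.uncurry fun (w : α) (u : ℝ) =>
      (Ioc (a w) (b w)).indicator (f w) u) := by
    have : (Function.uncurry fun (w : α) (u : ℝ) => (Ioc (a w) (b w)).indicator (f w) u)
        = fun q : α × ℝ => if q.2 ∈ Ioc (a q.1) (b q.1) then f q.1 q.2 else 0 := by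
      ext q; simp [Function.uncurry, Set.indicator_apply]
    rw [this]
    refine Measurable.ite ?_ hf measurable_const
    exact MeasurableSet.inter
      (measurableSet_lt (ha.comp measurable_fst) measurable_snd)
      (measurableSet_le measurable_snd (hb.comp measurable_fst))
  exact (this.stronglyMeasurable.integral_prod_right').measurable

lemma meas_d2F (f : ℝ × ℝ → ℝ) (hf : Measurable f) :
    Measurable fun w : ℝ × ℝ => d2F f w.1 w.2 := by
  have h : ∀ w : ℝ × ℝ, d2F f w.1 w.2
      = (∫ u in Ioc (0:ℝ) w.1, f (u, w.2)) - ∫ u in Ioc w.1 (0:ℝ), f (u, w.2) := fun w => rfl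
  simp_rw [h]
  exact (meas_setInt (fun w u => f (u, w.2))
      (hf.comp (measurable_snd.prodMk (measurable_fst.snd)))
      _ _ measurable_const measurable_fst).sub
    (meas_setInt (fun w u => f (u, w.2))
      (hf.comp (measurable_snd.prodMk (measurable_fst.snd)))
      _ _ measurable_fst measurable_const)

lemma meas_inner (f : ℝ × ℝ → ℝ) (hf : Measurable f) :
    Measurable fun u : ℝ => ∫ v in Ioi (0:ℝ), f (u, v) := by
  have h1 : ∀ u : ℝ, (∫ v in Ioi (0:ℝ), f (u, v)) =
      ∫ v, (Ioi (0:ℝ)).indicator (fun v => f (u, v)) v := by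
    intro u; rw [integral_indicator measurableSet_Ioi]
  simp_rw [h1]
  have : Measurable fun q : ℝ × ℝ => (Ioi (0:ℝ)).indicator (fun v => f (q.1, v)) q.2 := by
    have : (fun q : ℝ × ℝ => (Ioi (0:ℝ)).indicator (fun v => f (q.1, v)) q.2)
        = fun q : ℝ × ℝ => if 0 < q.2 then f q else 0 := by
      ext q; simp [Set.indicator_apply]
    rw [this]
    exact Measurable.ite (measurableSet_lt measurable_const measurable_snd) hf measurable_const
  exact (this.stronglyMeasurable.integral_prod_right').measurable

lemma meas_margX (f : ℝ × ℝ → ℝ) (hf : Measurable f) : Measurable (margX f) := by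
  show Measurable fun t => margX f t
  have h : ∀ t : ℝ, margX f t
      = (∫ u in Ioc (0:ℝ) t, ∫ v in Ioi (0:ℝ), f (u, v))
        - ∫ u in Ioc t (0:ℝ), ∫ v in Ioi (0:ℝ), f (u, v) := fun t => rfl
  simp_rw [h]
  exact (meas_setInt (fun t u => ∫ v in Ioi (0:ℝ), f (u, v)) ((meas_inner f hf).comp measurable_snd)
      _ _ measurable_const measurable_id).sub
    (meas_setInt (fun t u => ∫ v in Ioi (0:ℝ), f (u, v)) ((meas_inner f hf).comp measurable_snd)
      _ _ measurable_id measurable_const)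

lemma meas_sDens (f : ℝ × ℝ → ℝ) (g : ℝ → ℝ) (hf : Measurable f) (hg : Measurable g) :
    Measurable (sDens f g) := by
  unfold sDens
  refine ((hg.comp measurable_fst)).mul ?_
  refine Measurable.ite (measurableSet_lt measurable_const measurable_snd)
    (meas_d2F f hf) ?_
  refine Measurable.ite (measurableSet_eq_fun measurable_snd measurable_const) ?_ measurable_const
  exact (measurable_const.sub ((meas_margX f hf).comp measurable_fst))

/-- lintegral over `Iic 0` of a function vanishing on negatives is zero. -/
lemma lint_Iic_zero (φ : ℝ → ENNReal) (h : ∀ v < (0:ℝ), φ v = 0) :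
    ∫⁻ v in Iic (0:ℝ), φ v = 0 := by
  have h0 : ∀ᵐ v ∂(volume.restrict (Iic (0:ℝ))), φ v = 0 := by
    have h1 : ∀ᵐ v : ℝ ∂volume, v ≠ 0 := by
      rw [ae_iff]
      simpa using measure_singleton (0:ℝ)
    filter_upwards [ae_restrict_mem measurableSet_Iic, ae_restrict_of_ae h1] with v hv hne
    exact h v (lt_of_le_of_ne hv hne)
  rw [lintegral_congr_ae h0, lintegral_zero]

/-- lintegral over ℝ of a function vanishing on negatives equals the lintegral over `Ioi 0`. -/
lemma lint_eq_Ioi (φ : ℝ → ENNReal) (h : ∀ v < (0:ℝ), φ v = 0) :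
    ∫⁻ v, φ v = ∫⁻ v in Ioi (0:ℝ), φ v := by
  have : ∫⁻ v, φ v = ∫⁻ v in (Iic (0:ℝ) ∪ Ioi 0), φ v := by
    rw [Set.Iic_union_Ioi, setLIntegral_univ]
  rw [this, lintegral_union measurableSet_Ioi (Set.Iic_disjoint_Ioi le_rfl),
    lint_Iic_zero φ h, zero_add]

/-- lintegral over `Iic t`, `0 ≤ t`, of a function vanishing on negatives equals that
over `Ioc 0 t`. -/
lemma lint_Iic_eq_Ioc (t : ℝ) (ht : 0 ≤ t) (φ : ℝ → ENNReal) (h : ∀ v < (0:ℝ), φ v = 0) :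
    ∫⁻ v in Iic t, φ v = ∫⁻ v in Ioc (0:ℝ) t, φ v := by
  rw [← Set.Iic_union_Ioc_eq_Iic ht,
    lintegral_union measurableSet_Ioc (Set.Iic_disjoint_Ioc le_rfl),
    lint_Iic_zero φ h, zero_add]

/-- if `(X,Y)` has joint Lebesgue density `f` with `P(Y=0) = 0`, and `T`
is independent of `(X,Y)` with Lebesgue density `g`, then with `Δ = 1{X ≤ T}` and
`Z = Δ·Y`, the law of `W = (T,Z)` has density `s_f` with respect to `μ`:
`P((T,Z) ∈ B) = ∫_B s_f dμ` for every Borel set `B`. -/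
theorem stmt16 {Ω : Type*} [MeasurableSpace Ω] (P : Measure Ω) [IsProbabilityMeasure P]
    (X Y T : Ω → ℝ) (hX : Measurable X) (hY : Measurable Y) (hT : Measurable T)
    (f : ℝ × ℝ → ℝ) (g : ℝ → ℝ)
    (hfmeas : Measurable f) (hfnonneg : ∀ p, 0 ≤ f p)
    (hfsupp : ∀ p : ℝ × ℝ, p ∉ Ici (0 : ℝ) ×ˢ Ici (0 : ℝ) → f p = 0)
    (hgmeas : Measurable g) (hgnonneg : ∀ t, 0 ≤ g t) (hgsupp : ∀ t, t < 0 → g t = 0)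
    (hlawXY : Measure.map (fun ω => (X ω, Y ω)) P =
      volume.withDensity fun p => ENNReal.ofReal (f p))
    (hY0 : P {ω | Y ω = 0} = 0)
    (hlawT : Measure.map T P = volume.withDensity fun t => ENNReal.ofReal (g t))
    (hindep : ProbabilityTheory.IndepFun (fun ω => (X ω, Y ω)) T P) :
    ∀ B : Set (ℝ × ℝ), MeasurableSet B →
      P {ω | (T ω, if X ω ≤ T ω then Y ω else 0) ∈ B} =
        ∫⁻ w in B, ENNReal.ofReal (sDens f g w) ∂domMeasure := by
  intro B hB
  classical
  have hf' : Measurable fun p : ℝ × ℝ => ENNReal.ofReal (f p) := hfmeas.ennreal_ofReal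
  have hg' : Measurable fun t : ℝ => ENNReal.ofReal (g t) := hgmeas.ennreal_ofReal
  set f' : ℝ × ℝ → ENNReal := fun p => ENNReal.ofReal (f p) with hf'def
  set g' : ℝ → ENNReal := fun t => ENNReal.ofReal (g t) with hg'def
  set μf : Measure (ℝ × ℝ) := volume.withDensity f' with hμf
  set μg : Measure ℝ := volume.withDensity g' with hμg
  haveI hPf : IsProbabilityMeasure μf := by
    rw [← hlawXY]; exact Measure.isProbabilityMeasure_map (hX.prodMk hY).aemeasurable
  haveI hPg : IsProbabilityMeasure μg := by
    rw [← hlawT]; exact Measure.isProbabilityMeasure_map hT.aemeasurable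
  -- total mass facts
  have htot : ∫⁻ p, f' p ∂(volume : Measure (ℝ × ℝ)) = 1 := by
    have h := measure_univ (μ := μf)
    rwa [hμf, withDensity_apply _ MeasurableSet.univ, Measure.restrict_univ] at h
  have htot1 : ∫⁻ x, (∫⁻ z, f' (x, z) ∂volume) ∂volume = 1 := by
    rw [← htot, Measure.volume_eq_prod, lintegral_prod _ hf'.aemeasurable]
  have htot2 : ∫⁻ z, (∫⁻ x, f' (x, z) ∂volume) ∂volume = 1 := by
    rw [← htot, Measure.volume_eq_prod, lintegral_prod_symm _ hf'.aemeasurable]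
  have hsliceZ : ∀ᵐ z : ℝ ∂volume, ∫⁻ x, f' (x, z) ∂volume < ⊤ := by
    refine ae_lt_top ?_ ?_
    · exact Measurable.lintegral_prod_right' (hf'.comp (measurable_snd.prodMk measurable_fst))
    · rw [htot2]; exact ENNReal.one_ne_top
  have hsliceX : ∀ᵐ x : ℝ ∂volume, ∫⁻ z, f' (x, z) ∂volume < ⊤ := by
    refine ae_lt_top ?_ ?_
    · exact Measurable.lintegral_prod_right' hf'
    · rw [htot1]; exact ENNReal.one_ne_top
  -- support facts
  have hfneg1 : ∀ x z : ℝ, x < 0 → f' (x, z) = 0 := by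
    intro x z hx
    simp only [hf'def]
    rw [hfsupp (x, z) (fun hmem => not_le.mpr hx hmem.1), ENNReal.ofReal_zero]
  have hfneg2 : ∀ x z : ℝ, z < 0 → f' (x, z) = 0 := by
    intro x z hz
    simp only [hf'def]
    rw [hfsupp (x, z) (fun hmem => not_le.mpr hz hmem.2), ENNReal.ofReal_zero]
  -- the map φ
  set φ : (ℝ × ℝ) × ℝ → ℝ × ℝ := fun q => (q.2, if q.1.1 ≤ q.2 then q.1.2 else 0) with hφdef
  have hφ : Measurable φ := by
    refine measurable_snd.prodMk ?_
    exact Measurable.ite (measurableSet_le measurable_fst.fst measurable_snd)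
      measurable_fst.snd measurable_const
  have hpairmeas : Measurable fun ω => ((X ω, Y ω), T ω) := (hX.prodMk hY).prodMk hT
  have hmap : P.map (fun ω => ((X ω, Y ω), T ω)) = μf.prod μg := by
    rw [← hlawXY, ← hlawT]
    exact (ProbabilityTheory.indepFun_iff_map_prod_eq_prod_map_map
      (hX.prodMk hY).aemeasurable hT.aemeasurable).mp hindep
  have hLHS1 : P {ω | (T ω, if X ω ≤ T ω then Y ω else 0) ∈ B} = (μf.prod μg) (φ ⁻¹' B) := by
    rw [← hmap, Measure.map_apply hpairmeas (hφ hB)]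
    rfl
  set Bt : ℝ → Set ℝ := fun t => {z | (t, z) ∈ B} with hBtdef
  have hBtmeas : ∀ t, MeasurableSet (Bt t) := fun t => measurable_prodMk_left hB
  have hsplit : ∀ t : ℝ, (fun p : ℝ × ℝ => (p, t)) ⁻¹' (φ ⁻¹' B)
      = (Iic t ×ˢ Bt t) ∪ (if (t, (0:ℝ)) ∈ B then {p : ℝ × ℝ | t < p.1} else ∅) := by
    intro t
    ext p
    simp only [Set.mem_preimage, hφdef, Set.mem_union, Set.mem_prod, Set.mem_Iic, hBtdef,
      Set.mem_setOf_eq]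
    by_cases h : p.1 ≤ t <;> by_cases h0 : (t, (0:ℝ)) ∈ B <;>
      simp [h, h0, not_le.mp, not_le, not_lt.mpr] <;> tauto
  have hμfS : ∀ t : ℝ, μf ((fun p : ℝ × ℝ => (p, t)) ⁻¹' (φ ⁻¹' B))
      = μf (Iic t ×ˢ Bt t)
        + (if (t, (0:ℝ)) ∈ B then 1 else 0) * μf {p : ℝ × ℝ | t < p.1} := by
    intro t
    rw [hsplit t]
    by_cases h0 : (t, (0:ℝ)) ∈ B
    · rw [if_pos h0, if_pos h0, one_mul]
      refine measure_union ?_ ?_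
      · rw [Set.disjoint_left]
        rintro p hp1 hp2
        exact not_lt.mpr hp1.1 (Set.mem_setOf_eq ▸ hp2)
      · exact measurableSet_lt measurable_const measurable_fst
    · rw [if_neg h0, if_neg h0, zero_mul, Set.union_empty, add_zero]
  have hFmeas : Measurable fun t => μf ((fun p : ℝ × ℝ => (p, t)) ⁻¹' (φ ⁻¹' B)) :=
    measurable_measure_prodMk_right (hφ hB)
  have hLHS : P {ω | (T ω, if X ω ≤ T ω then Y ω else 0) ∈ B}
      = ∫⁻ t, g' t * (μf (Iic t ×ˢ Bt t)
          + (if (t, (0:ℝ)) ∈ B then 1 else 0) * μf {p : ℝ × ℝ | t < p.1}) ∂volume := by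
    rw [hLHS1, Measure.prod_apply_symm (hφ hB), hμg,
      lintegral_withDensity_eq_lintegral_mul _ hg' hFmeas]
    simp_rw [Pi.mul_apply]
    exact lintegral_congr fun t => by rw [hμfS t]
  -- a.e. inner identity in z
  have hne0 : ∀ᵐ z : ℝ ∂volume, z ≠ 0 := by
    rw [ae_iff]; simpa using measure_singleton (0:ℝ)
  have hinner : ∀ t : ℝ, 0 ≤ t → (∀ᵐ z : ℝ ∂volume,
      (∫⁻ x in Iic t, f' (x, z) ∂volume)
        = if 0 < z then ENNReal.ofReal (d2F f t z) else 0) := by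
    intro t ht
    filter_upwards [hsliceZ, hne0] with z hz hzne
    rcases lt_or_gt_of_ne hzne with hneg | hpos
    · rw [if_neg (not_lt.mpr hneg.le)]
      have h0 : ∀ᵐ x ∂(volume.restrict (Iic t)), f' (x, z) = 0 :=
        ae_of_all _ fun x => hfneg2 x z hneg
      rw [lintegral_congr_ae h0, lintegral_zero]
    · rw [if_pos hpos]
      rw [lint_Iic_eq_Ioc t ht _ (fun x hx => hfneg1 x z hx)]
      have hint : IntegrableOn (fun x => f (x, z)) (Ioc (0:ℝ) t) volume := by
        constructor
        · exact (hfmeas.comp (measurable_id.prodMk measurable_const)).aestronglyMeasurable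
        · rw [hasFiniteIntegral_iff_ofReal (ae_of_all _ fun x => hfnonneg (x, z))]
          exact lt_of_le_of_lt (setLIntegral_le_lintegral _ _) hz
      rw [show (fun x : ℝ => f' (x, z)) = fun x : ℝ => ENNReal.ofReal (f (x, z)) from rfl]
      rw [← ofReal_integral_eq_lintegral_ofReal hint (ae_of_all _ fun x => hfnonneg (x, z))]
      rw [show d2F f t z = ∫ u in (0:ℝ)..t, f (u, z) from rfl,
        intervalIntegral.integral_of_le ht]
  -- marginal identity
  have hmarg_nonneg : ∀ t : ℝ, 0 ≤ t → 0 ≤ margX f t := fun t ht =>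
    intervalIntegral.integral_nonneg ht fun u _ => integral_nonneg fun v => hfnonneg _
  have hae_h : ∀ᵐ u : ℝ ∂volume,
      ENNReal.ofReal (∫ v in Ioi (0:ℝ), f (u, v)) = ∫⁻ v, f' (u, v) ∂volume := by
    filter_upwards [hsliceX] with u hu
    have hint : IntegrableOn (fun v => f (u, v)) (Ioi (0:ℝ)) volume := by
      constructor
      · exact (hfmeas.comp (measurable_const.prodMk measurable_id)).aestronglyMeasurable
      · rw [hasFiniteIntegral_iff_ofReal (ae_of_all _ fun v => hfnonneg (u, v))]
        exact lt_of_le_of_lt (setLIntegral_le_lintegral _ _) hu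
    rw [ofReal_integral_eq_lintegral_ofReal hint (ae_of_all _ fun v => hfnonneg (u, v))]
    rw [lint_eq_Ioi _ (fun v hv => hfneg2 u v hv)]
  have hK1' : ∀ t : ℝ, 0 ≤ t → μf {p : ℝ × ℝ | p.1 ≤ t} = ENNReal.ofReal (margX f t) := by
    intro t ht
    have hset : {p : ℝ × ℝ | p.1 ≤ t} = Iic t ×ˢ (univ : Set ℝ) := by
      ext p; simp
    rw [hμf, hset, withDensity_apply _ (measurableSet_Iic.prod MeasurableSet.univ),
      Measure.volume_eq_prod, ← Measure.prod_restrict, Measure.restrict_univ,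
      lintegral_prod _ hf'.aemeasurable]
    rw [lint_Iic_eq_Ioc t ht _ (fun x hx => by
      have : (fun z => f' (x, z)) = fun _ => (0 : ENNReal) := funext fun z => hfneg1 x z hx
      rw [this, lintegral_zero])]
    have hmx : margX f t = ∫ u in Ioc (0:ℝ) t, ∫ v in Ioi (0:ℝ), f (u, v) :=
      intervalIntegral.integral_of_le ht
    have hint_h : IntegrableOn (fun u => ∫ v in Ioi (0:ℝ), f (u, v)) (Ioc (0:ℝ) t) volume := by
      constructor
      · exact (meas_inner f hfmeas).aestronglyMeasurable
      · rw [hasFiniteIntegral_iff_ofReal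
          (ae_of_all _ fun u => integral_nonneg fun v => hfnonneg _)]
        calc ∫⁻ u in Ioc (0:ℝ) t, ENNReal.ofReal (∫ v in Ioi (0:ℝ), f (u, v)) ∂volume
            = ∫⁻ u in Ioc (0:ℝ) t, (∫⁻ v, f' (u, v) ∂volume) ∂volume :=
              lintegral_congr_ae (ae_restrict_of_ae hae_h)
          _ ≤ ∫⁻ u, (∫⁻ v, f' (u, v) ∂volume) ∂volume := setLIntegral_le_lintegral _ _
          _ = 1 := htot1
          _ < ⊤ := ENNReal.one_lt_top
    rw [hmx, ofReal_integral_eq_lintegral_ofReal hint_h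
      (ae_of_all _ fun u => integral_nonneg fun v => hfnonneg _)]
    exact (lintegral_congr_ae (ae_restrict_of_ae hae_h)).symm
  have hK1 : ∀ t : ℝ, 0 ≤ t → μf {p : ℝ × ℝ | t < p.1} = ENNReal.ofReal (1 - margX f t) := by
    intro t ht
    have hc : {p : ℝ × ℝ | t < p.1} = {p : ℝ × ℝ | p.1 ≤ t}ᶜ := by
      ext p; simp [not_le]
    have hms : MeasurableSet {p : ℝ × ℝ | p.1 ≤ t} :=
      measurableSet_le measurable_fst measurable_const
    rw [hc, measure_compl hms (measure_ne_top _ _), hK1' t ht, measure_univ,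
      ENNReal.ofReal_sub _ (hmarg_nonneg t ht), ENNReal.ofReal_one]
  -- the RHS
  set s' : ℝ × ℝ → ENNReal := fun w => ENNReal.ofReal (sDens f g w) with hs'def
  have hs'meas : Measurable s' := (meas_sDens f g hfmeas hgmeas).ennreal_ofReal
  have hImeas : Measurable fun t : ℝ => ∫⁻ z, (B.indicator s') (t, z) ∂volume :=
    Measurable.lintegral_prod_right' (hs'meas.indicator hB)
  have hRHS : ∫⁻ w in B, s' w ∂domMeasure
      = ∫⁻ t, ((∫⁻ z, (B.indicator s') (t, z) ∂volume)
          + (Ici (0:ℝ)).indicator (fun x => (B.indicator s') (x, 0)) t) ∂volume := by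
    rw [domMeasure, Measure.restrict_add, lintegral_add_measure]
    have h1 : ∫⁻ w in B, s' w ∂(volume : Measure (ℝ × ℝ))
        = ∫⁻ t, ∫⁻ z, (B.indicator s') (t, z) ∂volume ∂volume := by
      rw [← lintegral_indicator hB, Measure.volume_eq_prod,
        lintegral_prod _ ((hs'meas.indicator hB).aemeasurable)]
    have h2 : ∫⁻ w in B, s' w ∂(Measure.map (fun x : ℝ => (x, (0:ℝ))) (volume.restrict (Ici 0)))
        = ∫⁻ t, (Ici (0:ℝ)).indicator (fun x => (B.indicator s') (x, 0)) t ∂volume := by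
      rw [← lintegral_indicator hB, lintegral_map (hs'meas.indicator hB)
        measurable_prodMk_right,
        ← lintegral_indicator measurableSet_Ici]
    rw [h1, h2, ← lintegral_add_left hImeas]
  rw [hLHS, hRHS]
  refine lintegral_congr fun t => ?_
  by_cases ht : 0 ≤ t
  · rw [mul_add]
    congr 1
    · -- part (a)
      have hA : μf (Iic t ×ˢ Bt t)
          = ∫⁻ z in Bt t, (∫⁻ x in Iic t, f' (x, z) ∂volume) ∂volume := by
        rw [hμf, withDensity_apply _ ((measurableSet_Iic).prod (hBtmeas t)),
          Measure.volume_eq_prod, ← Measure.prod_restrict,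
          lintegral_prod_symm _ hf'.aemeasurable]
      have hDmeas : Measurable fun z : ℝ => if 0 < z then ENNReal.ofReal (d2F f t z) else 0 :=
        Measurable.ite (measurableSet_lt measurable_const measurable_id)
          (((meas_d2F f hfmeas).comp (measurable_const.prodMk measurable_id)).ennreal_ofReal)
          measurable_const
      have hcongr : ∀ᵐ z : ℝ ∂volume, (B.indicator s') (t, z)
          = (Bt t).indicator
            (fun z => g' t * (if 0 < z then ENNReal.ofReal (d2F f t z) else 0)) z := by
        filter_upwards [hne0] with z hzne
        rw [Set.indicator_apply, Set.indicator_apply]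
        simp only [hBtdef, Set.mem_setOf_eq]
        by_cases hb : (t, z) ∈ B
        · rw [if_pos hb, if_pos hb]
          rcases lt_or_gt_of_ne hzne with hneg | hpos
          · rw [if_neg (not_lt.mpr hneg.le), mul_zero]
            simp [hs'def, sDens, not_lt.mpr hneg.le, hneg.ne]
          · rw [if_pos hpos]
            simp only [hs'def, sDens, if_pos hpos]
            exact ENNReal.ofReal_mul (hgnonneg t)
        · rw [if_neg hb, if_neg hb]
      rw [lintegral_congr_ae hcongr, lintegral_indicator (hBtmeas t),
        lintegral_const_mul _ hDmeas]
      congr 1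
      rw [hA]
      exact lintegral_congr_ae (ae_restrict_of_ae (hinner t ht))
    · -- part (b)
      rw [Set.indicator_of_mem (Set.mem_Ici.mpr ht), hK1 t ht, Set.indicator_apply]
      by_cases h0 : (t, (0:ℝ)) ∈ B
      · rw [if_pos h0, if_pos h0, one_mul]
        have hs0 : s' (t, 0) = ENNReal.ofReal (g t * (1 - margX f t)) := by
          simp [hs'def, sDens]
        rw [hs0, ENNReal.ofReal_mul (hgnonneg t)]
      · rw [if_neg h0, if_neg h0, zero_mul, mul_zero]
  · push_neg at ht
    have hg0 : g t = 0 := hgsupp t ht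
    have hz : ∀ z : ℝ, (B.indicator s') (t, z) = 0 := by
      intro z
      rw [Set.indicator_apply]
      have : s' (t, z) = 0 := by simp [hs'def, sDens, hg0]
      simp [this]
    have hgt : g' t = 0 := by simp [hg'def, hg0]
    rw [hgt, zero_mul, Set.indicator_of_notMem (by simpa using ht)]
    simp [hz]


end
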